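/- For a convex lower semicontinuous φ: ℝ₊ → (-∞,+∞] with φ(1) = 0, and an empirical measure P̂ₙ on n atoms with bounded loss ℓ(θ,·), strong duality holds: sup_{Q : D_φ(Q, P̂ₙ) ≤ δ} E_Q[ℓ(θ, ξ)] = inf_{λ ≥ 0, μ ∈ ℝ} { E_{P̂ₙ}[λ φ*((ℓ(θ,ξ) − μ)/λ)] + λδ + μ }, where φ*(s) = sup_{t ≥ 0}(s·t − φ(t)) is the convex conjugate of φ. -/

import Mathlib

set_option maxHeartbeats 1000000

open MeasureTheory Filter

/-- Convex conjugate of φ restricted to t ≥ 0, valued in extended reals: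
φ*(s) = sup_{t ≥ 0} (s·t − φ(t)). -/
noncomputable def phiConj (φ : ℝ → ℝ) (s : ℝ) : EReal :=
  ⨆ t : {t : ℝ // 0 ≤ t}, ((s * t.1 - φ t.1 : ℝ) : EReal)

/-- The perspective λ·φ*(s/λ), interpreted at λ = 0 as the limit as λ → 0⁺. -/
noncomputable def phiPerspective (φ : ℝ → ℝ) (lam s : ℝ) : EReal :=
  if lam = 0 then
    Filter.limsup (fun l : ℝ => (l : EReal) * phiConj φ (s / l)) (nhdsWithin 0 (Set.Ioi 0))
  else (lam : EReal) * phiConj φ (s / lam)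

section auxlemmas
open Set

lemma ereal_coe_sum {n : ℕ} (f : Fin n → ℝ) : ((∑ i, f i : ℝ) : EReal) = ∑ i, ((f i : ℝ) : EReal) :=
  map_sum (⟨⟨(Real.toEReal), EReal.coe_zero⟩, EReal.coe_add⟩ : ℝ →+ EReal) f Finset.univ

lemma conj_lb (φ : ℝ → ℝ) {lam : ℝ} (hlam : 0 < lam) (s t : ℝ) (ht : 0 ≤ t) :
    ((s * t - lam * φ t : ℝ) : EReal) ≤ (lam : EReal) * phiConj φ (s / lam) := by
  have h1 : ((s / lam * t - φ t : ℝ) : EReal) ≤ phiConj φ (s / lam) :=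
    le_iSup (fun t : {t : ℝ // 0 ≤ t} => ((s / lam * t.1 - φ t.1 : ℝ) : EReal)) ⟨t, ht⟩
  have h2 : (lam : EReal) * ((s / lam * t - φ t : ℝ) : EReal)
      ≤ (lam : EReal) * phiConj φ (s / lam) :=
    mul_le_mul_of_nonneg_left h1 (by exact_mod_cast hlam.le)
  refine le_trans (le_of_eq ?_) h2
  rw [← EReal.coe_mul]
  norm_cast
  field_simp

lemma persp_lb (φ : ℝ → ℝ) {lam : ℝ} (hlam : 0 ≤ lam) (s t : ℝ) (ht : 0 ≤ t) :
    ((s * t - lam * φ t : ℝ) : EReal) ≤ phiPerspective φ lam s := by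
  rcases eq_or_lt_of_le hlam with h | h
  · subst h
    rw [phiPerspective, if_pos rfl]
    have hev : ∀ᶠ l in nhdsWithin (0:ℝ) (Set.Ioi 0),
        ((s * t - l * φ t : ℝ) : EReal) ≤ (l : EReal) * phiConj φ (s / l) :=
      eventually_nhdsWithin_of_forall (fun l hl => conj_lb φ hl s t ht)
    have h1 : Filter.limsup (fun l : ℝ => ((s * t - l * φ t : ℝ) : EReal))
        (nhdsWithin 0 (Set.Ioi 0))
        ≤ Filter.limsup (fun l : ℝ => (l : EReal) * phiConj φ (s / l))
          (nhdsWithin 0 (Set.Ioi 0)) := limsup_le_limsup hev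
    have h2 : Filter.Tendsto (fun l : ℝ => ((s * t - l * φ t : ℝ) : EReal))
        (nhdsWithin 0 (Set.Ioi 0)) (nhds ((s * t : ℝ) : EReal)) := by
      rw [EReal.tendsto_coe]
      have hc : Continuous (fun l : ℝ => s * t - l * φ t) := by continuity
      have h := hc.tendsto 0
      simp only [zero_mul, sub_zero] at h
      exact h.mono_left nhdsWithin_le_nhds
    have h3 := h2.limsup_eq
    rw [show s * t - 0 * φ t = s * t by ring]
    rw [← h3]
    exact h1
  · rw [phiPerspective, if_neg h.ne']
    exact conj_lb φ h s t ht

lemma persp_ub (φ : ℝ → ℝ) {lam : ℝ} (hlam : 0 < lam) (s B : ℝ)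
    (h : ∀ t : ℝ, 0 ≤ t → s * t - lam * φ t ≤ B) :
    phiPerspective φ lam s ≤ (B : EReal) := by
  rw [phiPerspective, if_neg hlam.ne']
  have h1 : phiConj φ (s / lam) ≤ ((B / lam : ℝ) : EReal) := by
    apply iSup_le
    rintro ⟨t, ht⟩
    have hr : s / lam * t - φ t ≤ B / lam := by
      rw [le_div_iff₀ hlam]
      have := h t ht
      have he : (s / lam * t - φ t) * lam = s * t - lam * φ t := by
        field_simp
      rw [he]
      exact this
    exact_mod_cast hr
  calc (lam : EReal) * phiConj φ (s / lam)
      ≤ (lam : EReal) * ((B / lam : ℝ) : EReal) :=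
        mul_le_mul_of_nonneg_left h1 (by exact_mod_cast hlam.le)
    _ = ((lam * (B / lam) : ℝ) : EReal) := (EReal.coe_mul _ _).symm
    _ = (B : EReal) := by rw [mul_div_cancel₀ _ hlam.ne']

lemma subgrad (φ : ℝ → ℝ) (hconv : ConvexOn ℝ (Set.Ici 0) φ) (hφ1 : φ 1 = 0) :
    ∃ k : ℝ, ∀ t : ℝ, 0 ≤ t → k * (t - 1) ≤ φ t := by
  set K := (fun t => (φ 1 - φ t) / (1 - t)) '' (Set.Ico (0:ℝ) 1) with hK
  have hne : K.Nonempty := ⟨_, ⟨0, by constructor <;> norm_num, rfl⟩⟩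
  have hbdd : BddAbove K := by
    refine ⟨(φ 2 - φ 1) / (2 - 1), ?_⟩
    rintro y ⟨t, ht, rfl⟩
    exact hconv.slope_mono_adjacent (by exact ht.1) (by norm_num) ht.2 (by norm_num)
  set k := sSup K with hk
  refine ⟨k, fun t ht => ?_⟩
  rcases lt_trichotomy t 1 with h | h | h
  · have h1 : (φ 1 - φ t) / (1 - t) ≤ k := le_csSup hbdd ⟨t, ⟨ht, h⟩, rfl⟩
    rw [div_le_iff₀ (by linarith)] at h1
    rw [hφ1] at h1
    nlinarith
  · subst h; simp [hφ1]
  · have h2 : k ≤ (φ t - φ 1) / (t - 1) := by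
      apply csSup_le hne
      rintro y ⟨u, hu, rfl⟩
      exact hconv.slope_mono_adjacent (by exact hu.1) (by simp only [Set.mem_Ici]; linarith)
        hu.2 h
    rw [le_div_iff₀ (by linarith)] at h2
    rw [hφ1] at h2
    nlinarith


lemma dro_separation {n : ℕ} (hn : 0 < n) (φ : ℝ → ℝ) (hconv : ConvexOn ℝ (Set.Ici 0) φ)
    (hφ1 : φ 1 = 0) (ℓ : Fin n → ℝ) (δ : ℝ) (hδ : 0 < δ) (v ε : ℝ) (hε : 0 < ε)
    (hub : ∀ q : Fin n → ℝ, (∀ i, 0 ≤ q i) → (∑ i, q i) = 1 →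
      (n:ℝ)⁻¹ * ∑ i, φ ((n:ℝ) * q i) ≤ δ → ∑ i, q i * ℓ i ≤ v) :
    ∃ lam₀ : ℝ, 0 ≤ lam₀ ∧ ∃ c : ℝ, ∀ q : Fin n → ℝ, (∀ i, 0 ≤ q i) →
      (∑ i, q i * ℓ i) - lam₀ * ((n:ℝ)⁻¹ * (∑ i, φ ((n:ℝ) * q i)) - δ)
        + c * ((∑ i, q i) - 1) ≤ v + ε := by
  set m : ℝ := (n : ℝ) with hm
  have hm0 : (0:ℝ) < m := by rw [hm]; exact_mod_cast hn
  -- the convex set A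
  set A : Set (ℝ × ℝ × ℝ) := {p | ∃ q : Fin n → ℝ, (∀ i, 0 ≤ q i) ∧
    m⁻¹ * (∑ i, φ (m * q i)) - δ ≤ p.1 ∧ (∑ i, q i) = p.2.1 ∧ p.2.2 ≤ ∑ i, q i * ℓ i} with hA
  have hAconv : Convex ℝ A := by
    rintro p ⟨q, hq, h1, h2, h3⟩ p' ⟨q', hq', h1', h2', h3'⟩ a b ha hb hab
    refine ⟨fun i => a * q i + b * q' i,
      fun i => add_nonneg (mul_nonneg ha (hq i)) (mul_nonneg hb (hq' i)), ?_, ?_, ?_⟩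
    · have hφi : ∀ i, φ (m * (a * q i + b * q' i)) ≤ a * φ (m * q i) + b * φ (m * q' i) := by
        intro i
        have e : m * (a * q i + b * q' i) = a • (m * q i) + b • (m * q' i) := by
          simp only [smul_eq_mul]; ring
        rw [e]
        exact hconv.2 (mul_nonneg hm0.le (hq i)) (mul_nonneg hm0.le (hq' i)) ha hb hab
      have hsum : (∑ i, φ (m * (a * q i + b * q' i)))
          ≤ a * (∑ i, φ (m * q i)) + b * (∑ i, φ (m * q' i)) := by
        rw [Finset.mul_sum, Finset.mul_sum, ← Finset.sum_add_distrib]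
        exact Finset.sum_le_sum fun i _ => hφi i
      have hkey : m⁻¹ * (∑ i, φ (m * (a * q i + b * q' i)))
          ≤ a * (m⁻¹ * (∑ i, φ (m * q i))) + b * (m⁻¹ * (∑ i, φ (m * q' i))) := by
        calc m⁻¹ * (∑ i, φ (m * (a * q i + b * q' i)))
            ≤ m⁻¹ * (a * (∑ i, φ (m * q i)) + b * (∑ i, φ (m * q' i))) :=
              mul_le_mul_of_nonneg_left hsum (inv_nonneg.mpr hm0.le)
          _ = a * (m⁻¹ * (∑ i, φ (m * q i))) + b * (m⁻¹ * (∑ i, φ (m * q' i))) := by ring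
      have ha1 := mul_le_mul_of_nonneg_left h1 ha
      have hb1 := mul_le_mul_of_nonneg_left h1' hb
      have hδab : a * δ + b * δ = δ := by rw [← add_mul, hab, one_mul]
      show m⁻¹ * (∑ i, φ (m * (a * q i + b * q' i))) - δ ≤ (a • p + b • p').1
      have hfst : (a • p + b • p').1 = a * p.1 + b * p'.1 := rfl
      rw [hfst]
      nlinarith [ha1, hb1, hkey, hδab]
    · show (∑ i, (a * q i + b * q' i)) = (a • p + b • p').2.1
      have : (a • p + b • p').2.1 = a * p.2.1 + b * p'.2.1 := rfl
      rw [this, Finset.sum_add_distrib, ← Finset.mul_sum, ← Finset.mul_sum, h2, h2']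
    · show (a • p + b • p').2.2 ≤ ∑ i, (a * q i + b * q' i) * ℓ i
      have hsnd : (a • p + b • p').2.2 = a * p.2.2 + b * p'.2.2 := rfl
      have : (∑ i, (a * q i + b * q' i) * ℓ i)
          = a * (∑ i, q i * ℓ i) + b * (∑ i, q' i * ℓ i) := by
        rw [Finset.mul_sum, Finset.mul_sum, ← Finset.sum_add_distrib]
        exact Finset.sum_congr rfl fun i _ => by ring
      rw [hsnd, this]
      exact add_le_add (mul_le_mul_of_nonneg_left h3 ha) (mul_le_mul_of_nonneg_left h3' hb)
  -- continuity of φ at 1, choice of η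
  have hcont : ContinuousAt φ 1 := by
    have := hconv.continuousOn_interior
    rw [interior_Ici] at this
    exact this.continuousAt (Ioi_mem_nhds one_pos)
  have hpre : φ ⁻¹' (Set.Iio δ) ∈ nhds (1:ℝ) := by
    have h0δ : φ 1 < δ := by rw [hφ1]; exact hδ
    exact hcont (Iio_mem_nhds h0δ)
  obtain ⟨η, hη0, hηsub⟩ := Metric.mem_nhds_iff.mp hpre
  set η' : ℝ := min η (1/2) with hη'
  have hη'0 : 0 < η' := lt_min hη0 (by norm_num)
  have hη'half : η' ≤ 1/2 := min_le_right _ _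
  have hφη : ∀ s : ℝ, |s - 1| < η' → φ s < δ := by
    intro s hs
    have : s ∈ Metric.ball (1:ℝ) η := by
      rw [Metric.mem_ball, Real.dist_eq]; exact lt_of_lt_of_le hs (min_le_left _ _)
    exact hηsub this
  set meanL : ℝ := ∑ i, m⁻¹ * ℓ i with hmeanL
  set c₀ : ℝ := -(2 * |meanL|) - 1 with hc₀
  -- uniform-type vectors
  have huniform : ∀ s : ℝ, 0 ≤ s →
      (∀ i : Fin n, (0:ℝ) ≤ s * m⁻¹) ∧ (m * (s * m⁻¹) = s)
        ∧ (∑ _i : Fin n, (s * m⁻¹)) = s ∧ (∑ i, (s * m⁻¹) * ℓ i) = s * meanL := by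
    intro s hs
    have hmul : m * (s * m⁻¹) = s := by field_simp
    refine ⟨fun i => by positivity, hmul, ?_, ?_⟩
    · rw [Finset.sum_const, Finset.card_univ, Fintype.card_fin, nsmul_eq_mul]
      rw [← hm]; field_simp
    · rw [hmeanL, Finset.mul_sum]
      exact Finset.sum_congr rfl fun i _ => by ring
  have hsumconst : ∀ s : ℝ, (∑ _i : Fin n, (s : ℝ)) = m * s := by
    intro s
    rw [Finset.sum_const, Finset.card_univ, Fintype.card_fin, nsmul_eq_mul, hm]
  -- O is an open subset of A
  set O : Set (ℝ × ℝ × ℝ) := Set.Ioi (0:ℝ) ×ˢ (Set.Ioo (1 - η') (1 + η') ×ˢ Set.Iio c₀) with hO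
  have hOopen : IsOpen O := isOpen_Ioi.prod (isOpen_Ioo.prod isOpen_Iio)
  have hOsub : O ⊆ A := by
    rintro ⟨u, s, r⟩ ⟨hu, hs, hr⟩
    simp only [Set.mem_Ioi] at hu
    simp only [Set.mem_Ioo] at hs
    simp only [Set.mem_Iio] at hr
    have hs0 : 0 < s := by linarith [hs.1]
    obtain ⟨hq0, hqm, hqs, hqℓ⟩ := huniform s hs0.le
    refine ⟨fun _ => s * m⁻¹, hq0, ?_, hqs, ?_⟩
    · show m⁻¹ * (∑ _i : Fin n, φ (m * (s * m⁻¹))) - δ ≤ u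
      have hφs : φ s < δ := hφη s (abs_lt.mpr ⟨by linarith [hs.1], by linarith [hs.2]⟩)
      have h1 : (∑ _i : Fin n, φ (m * (s * m⁻¹))) = m * φ s := by
        simp only [hqm]; exact hsumconst _
      rw [h1]
      have h2 : m⁻¹ * (m * φ s) = φ s := by field_simp
      rw [h2]
      linarith
    · show r ≤ ∑ i, (s * m⁻¹) * ℓ i
      rw [hqℓ]
      have hs2 : s < 2 := by linarith [hs.2]
      have h1 : -(2 * |meanL|) ≤ s * meanL := by
        rcases le_or_gt 0 meanL with h | h
        · nlinarith [abs_nonneg meanL]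
        · have he : |meanL| = -meanL := abs_of_neg h
          nlinarith
      linarith
  have hy₀O : (((1:ℝ), (1:ℝ), c₀ - 1) : ℝ × ℝ × ℝ) ∈ O := by
    refine ⟨?_, ?_, ?_⟩
    · show (0:ℝ) < 1; norm_num
    · show (1:ℝ) ∈ Set.Ioo (1 - η') (1 + η'); exact ⟨by linarith, by linarith⟩
    · show c₀ - 1 < c₀; linarith
  have hy₀ : (((1:ℝ), (1:ℝ), c₀ - 1) : ℝ × ℝ × ℝ) ∈ interior A :=
    interior_maximal hOsub hOopen hy₀O
  -- the point to separate
  set x : ℝ × ℝ × ℝ := ((0:ℝ), (1:ℝ), v + ε) with hx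
  have hxA : x ∉ A := by
    rintro ⟨q, hq, h1, h2, h3⟩
    have h1' : m⁻¹ * (∑ i, φ (m * q i)) - δ ≤ 0 := h1
    have h2' : (∑ i, q i) = 1 := h2
    have h3' : v + ε ≤ ∑ i, q i * ℓ i := h3
    have := hub q hq h2' (by linarith)
    linarith
  obtain ⟨f, hfsep⟩ := geometric_hahn_banach_open_point hAconv.interior isOpen_interior
    (fun hxi => hxA (interior_subset hxi))
  -- extend the strict inequality to all of A
  have hfA : ∀ p ∈ A, f p ≤ f x := by
    intro p hp
    have hseg : ∀ θ : ℝ, θ ∈ Set.Ioo (0:ℝ) 1 →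
        (1 - θ) • (((1:ℝ), (1:ℝ), c₀ - 1) : ℝ × ℝ × ℝ) + θ • p ∈ interior A := by
      intro θ hθ
      exact hAconv.openSegment_interior_closure_subset_interior hy₀ (subset_closure hp)
        ⟨1 - θ, θ, by linarith [hθ.2], hθ.1, by ring, rfl⟩
    have hcont2 : Filter.Tendsto
        (fun θ : ℝ => f ((1 - θ) • (((1:ℝ), (1:ℝ), c₀ - 1) : ℝ × ℝ × ℝ) + θ • p))
        (nhdsWithin 1 (Set.Iio 1)) (nhds (f p)) := by
      have hc : Continuous fun θ : ℝ =>
          f ((1 - θ) • (((1:ℝ), (1:ℝ), c₀ - 1) : ℝ × ℝ × ℝ) + θ • p) := by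
        apply f.continuous.comp
        exact ((continuous_const.sub continuous_id).smul continuous_const).add
          (continuous_id.smul continuous_const)
      have h := hc.tendsto 1
      simp only [sub_self, zero_smul, one_smul, zero_add] at h
      exact h.mono_left nhdsWithin_le_nhds
    refine le_of_tendsto hcont2 ?_
    filter_upwards [Ioo_mem_nhdsLT_of_mem (show (1:ℝ) ∈ Set.Ioc (0:ℝ) 1 from ⟨one_pos, le_refl 1⟩)]
      with θ hθ
    exact (hfsep _ (hseg θ hθ)).le
  -- coordinates of f
  set α : ℝ := f ((1:ℝ), (0:ℝ), (0:ℝ)) with hα'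
  set β : ℝ := f ((0:ℝ), (1:ℝ), (0:ℝ)) with hβ'
  set γ : ℝ := f ((0:ℝ), (0:ℝ), (1:ℝ)) with hγ'
  have hf_eval : ∀ u s r : ℝ, f (u, s, r) = u * α + s * β + r * γ := by
    intro u s r
    have hrepr : ((u, s, r) : ℝ × ℝ × ℝ)
        = u • (((1:ℝ), (0:ℝ), (0:ℝ)) : ℝ × ℝ × ℝ) + s • ((0:ℝ), (1:ℝ), (0:ℝ))
          + r • ((0:ℝ), (0:ℝ), (1:ℝ)) := by
      simp [Prod.ext_iff]
    rw [hrepr, map_add, map_add, _root_.map_smul, _root_.map_smul, _root_.map_smul, smul_eq_mul, smul_eq_mul,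
      smul_eq_mul, hα', hβ', hγ']
  have hfx : f x = β + (v + ε) * γ := by
    rw [hx, hf_eval]; ring
  -- membership facts
  have hpA : ∀ u r : ℝ, -δ ≤ u → r ≤ meanL → ((u, (1:ℝ), r) : ℝ × ℝ × ℝ) ∈ A := by
    intro u r hu hr
    obtain ⟨hq0, hqm, hqs, hqℓ⟩ := huniform 1 zero_le_one
    refine ⟨fun _ => 1 * m⁻¹, hq0, ?_, hqs, ?_⟩
    · show m⁻¹ * (∑ _i : Fin n, φ (m * (1 * m⁻¹))) - δ ≤ u
      have h1 : (∑ _i : Fin n, φ (m * (1 * m⁻¹))) = 0 := by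
        simp only [hqm, hφ1]
        exact Finset.sum_const_zero
      rw [h1]
      simp only [mul_zero]
      linarith
    · show r ≤ ∑ i, (1 * m⁻¹) * ℓ i
      rw [hqℓ, one_mul]
      exact hr
  -- α ≤ 0
  have hαle : α ≤ 0 := by
    by_contra hpos
    push_neg at hpos
    set C0 : ℝ := f x - β - meanL * γ with hC0
    have hbound : ∀ u : ℝ, 0 ≤ u → u * α ≤ C0 := by
      intro u hu
      have := hfA _ (hpA u meanL (by linarith) le_rfl)
      rw [hf_eval] at this
      rw [hC0]; linarith
    have h1 := hbound (max 0 ((C0 + 1) / α)) (le_max_left _ _)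
    have h2 : (C0 + 1) / α ≤ max 0 ((C0 + 1) / α) := le_max_right _ _
    rw [div_le_iff₀ hpos] at h2
    linarith
  -- 0 ≤ γ
  have hγle : 0 ≤ γ := by
    by_contra hneg
    push_neg at hneg
    have h1 := hfA _ (hpA 0 (min meanL (v + ε - 1)) (by linarith) (min_le_left _ _))
    rw [hf_eval, hfx] at h1
    have h2 : min meanL (v + ε - 1) ≤ v + ε - 1 := min_le_right _ _
    nlinarith
  -- γ > 0
  have hγpos : 0 < γ := by
    rcases lt_or_eq_of_le hγle with h | h
    · exact h
    exfalso
    have hγ0 : γ = 0 := h.symm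
    have hαge : 0 ≤ α := by
      have h1 := hfA _ (hpA (-δ) meanL le_rfl le_rfl)
      rw [hf_eval, hfx, hγ0] at h1
      nlinarith
    have hα0 : α = 0 := le_antisymm hαle hαge
    have hβge : 0 ≤ β := by
      have hmem : (((m⁻¹ * (∑ _i : Fin n, φ (m * 0)) - δ : ℝ), (0:ℝ), (0:ℝ)) : ℝ × ℝ × ℝ) ∈ A := by
        refine ⟨fun _ => 0, fun _ => le_rfl, le_rfl, ?_, ?_⟩
        · show (∑ _i : Fin n, (0:ℝ)) = 0; exact Finset.sum_const_zero
        · show (0:ℝ) ≤ ∑ i, (0:ℝ) * ℓ i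
          simp
      have h1 := hfA _ hmem
      rw [hf_eval, hfx, hγ0, hα0] at h1
      linarith
    have hβle : β ≤ 0 := by
      obtain ⟨hq0, hqm, hqs, hqℓ⟩ := huniform 2 (by norm_num)
      have hmem : (((φ 2 - δ : ℝ), (2:ℝ), 2 * meanL) : ℝ × ℝ × ℝ) ∈ A := by
        refine ⟨fun _ => 2 * m⁻¹, hq0, ?_, hqs, ?_⟩
        · show m⁻¹ * (∑ _i : Fin n, φ (m * (2 * m⁻¹))) - δ ≤ φ 2 - δ
          have h1 : (∑ _i : Fin n, φ (m * (2 * m⁻¹))) = m * φ 2 := by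
            simp only [hqm]; exact hsumconst _
          rw [h1]
          have h2 : m⁻¹ * (m * φ 2) = φ 2 := by field_simp
          rw [h2]
        · show 2 * meanL ≤ ∑ i, (2 * m⁻¹) * ℓ i
          rw [hqℓ]
      have h1 := hfA _ hmem
      rw [hf_eval, hfx, hγ0, hα0] at h1
      linarith
    have hβ0 : β = 0 := le_antisymm hβle hβge
    have hstrict := hfsep _ hy₀
    rw [hf_eval, hfx, hγ0, hα0, hβ0] at hstrict
    linarith
  -- conclusion
  refine ⟨-α / γ, div_nonneg (by linarith) hγpos.le, β / γ, ?_⟩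
  intro q hq
  have hmem : (((m⁻¹ * (∑ i, φ (m * q i)) - δ : ℝ), (∑ i, q i), (∑ i, q i * ℓ i)) : ℝ × ℝ × ℝ) ∈ A :=
    ⟨q, hq, le_rfl, rfl, le_rfl⟩
  have h1 := hfA _ hmem
  rw [hf_eval, hfx] at h1
  have hγne : γ ≠ 0 := hγpos.ne'
  have h2 : ((∑ i, q i * ℓ i) - (-α / γ) * (m⁻¹ * (∑ i, φ (m * q i)) - δ)
      + (β / γ) * ((∑ i, q i) - 1)) * γ ≤ (v + ε) * γ := by
    have heq : ((∑ i, q i * ℓ i) - (-α / γ) * (m⁻¹ * (∑ i, φ (m * q i)) - δ)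
        + (β / γ) * ((∑ i, q i) - 1)) * γ
        = (∑ i, q i * ℓ i) * γ + α * (m⁻¹ * (∑ i, φ (m * q i)) - δ)
          + β * ((∑ i, q i) - 1) := by
      field_simp
      ring
    rw [heq]
    nlinarith [h1]
  exact le_of_mul_le_mul_right h2 hγpos

lemma dro_lagrangian {n : ℕ} (hn : 0 < n) (φ : ℝ → ℝ) (hconv : ConvexOn ℝ (Set.Ici 0) φ)
    (hφ1 : φ 1 = 0) (ℓ : Fin n → ℝ) (δ : ℝ) (hδ : 0 < δ) (v ε : ℝ) (hε : 0 < ε)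
    (hub : ∀ q : Fin n → ℝ, (∀ i, 0 ≤ q i) → (∑ i, q i) = 1 →
      (n:ℝ)⁻¹ * ∑ i, φ ((n:ℝ) * q i) ≤ δ → ∑ i, q i * ℓ i ≤ v) :
    ∃ lam : ℝ, 0 < lam ∧ ∃ μ : ℝ, ∀ t : Fin n → ℝ, (∀ i, 0 ≤ t i) →
      (n:ℝ)⁻¹ * (∑ i, (t i * (ℓ i - μ) - lam * φ (t i))) + lam * δ + μ ≤ v + ε := by
  set m : ℝ := (n : ℝ) with hm
  have hm0 : (0:ℝ) < m := by rw [hm]; exact_mod_cast hn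
  have hmm : m⁻¹ * m = 1 := inv_mul_cancel₀ hm0.ne'
  obtain ⟨k, hk⟩ := subgrad φ hconv hφ1
  obtain ⟨lam₀, hlam₀, c, hc⟩ := dro_separation hn φ hconv hφ1 ℓ δ hδ v (ε/2) (half_pos hε) hub
  set e : ℝ := ε / (2 * δ) with hedef
  have he0 : 0 < e := div_pos hε (by linarith)
  have heδ : e * δ = ε / 2 := by rw [hedef]; field_simp
  refine ⟨lam₀ + e, add_pos_of_nonneg_of_pos hlam₀ he0, -c - e * k, ?_⟩
  intro t ht
  set q : Fin n → ℝ := fun i => m⁻¹ * t i with hqdef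
  have hq : ∀ i, 0 ≤ q i := fun i => mul_nonneg (inv_nonneg.2 hm0.le) (ht i)
  have hmq : ∀ i, m * q i = t i := fun i => by
    rw [hqdef]; field_simp
  have h4 := hc q hq
  have hql : (∑ i, q i * ℓ i) = m⁻¹ * ∑ i, t i * ℓ i := by
    rw [Finset.mul_sum]; exact Finset.sum_congr rfl fun i _ => by rw [hqdef]; ring
  have hqs : (∑ i, q i) = m⁻¹ * ∑ i, t i := by
    rw [Finset.mul_sum]
  have hqφ : (∑ i, φ (m * q i)) = ∑ i, φ (t i) :=
    Finset.sum_congr rfl fun i _ => by rw [hmq]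
  rw [hql, hqs, hqφ] at h4
  -- subgradient sum bound
  have hksum : k * (∑ i, t i) - k * m ≤ ∑ i, φ (t i) := by
    have h5 := Finset.sum_le_sum (fun i (_ : i ∈ Finset.univ) => hk (t i) (ht i))
    have h6 : (∑ i, k * (t i - 1)) = k * (∑ i, t i) - k * m := by
      calc (∑ i, k * (t i - 1)) = ∑ i, (k * t i - k) :=
            Finset.sum_congr rfl fun i _ => by ring
        _ = (∑ i, k * t i) - ∑ _i : Fin n, k := Finset.sum_sub_distrib _ _
        _ = k * (∑ i, t i) - k * m := by
            rw [← Finset.mul_sum, Finset.sum_const, Finset.card_univ, Fintype.card_fin,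
              nsmul_eq_mul]
            rw [hm]
            ring_nf
    rw [h6] at h5
    exact h5
  have hk' : k * (m⁻¹ * (∑ i, t i)) - k ≤ m⁻¹ * (∑ i, φ (t i)) := by
    have h7 := mul_le_mul_of_nonneg_left hksum (inv_nonneg.2 hm0.le)
    have h8 : m⁻¹ * (k * (∑ i, t i) - k * m) = k * (m⁻¹ * (∑ i, t i)) - k * (m⁻¹ * m) := by
      ring
    rw [h8, hmm, mul_one] at h7
    exact h7
  have hprod : 0 ≤ e * ((m⁻¹ * (∑ i, φ (t i))) - (k * (m⁻¹ * (∑ i, t i)) - k)) :=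
    mul_nonneg he0.le (sub_nonneg.2 hk')
  have hexp : (∑ i, (t i * (ℓ i - (-c - e * k)) - (lam₀ + e) * φ (t i)))
      = (∑ i, t i * ℓ i) - (-c - e * k) * (∑ i, t i) - (lam₀ + e) * (∑ i, φ (t i)) := by
    calc (∑ i, (t i * (ℓ i - (-c - e * k)) - (lam₀ + e) * φ (t i)))
        = ∑ i, (t i * ℓ i - (-c - e * k) * t i - (lam₀ + e) * φ (t i)) :=
          Finset.sum_congr rfl fun i _ => by ring
      _ = ((∑ i, t i * ℓ i) - ∑ i, (-c - e * k) * t i) - ∑ i, (lam₀ + e) * φ (t i) := by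
          rw [Finset.sum_sub_distrib, Finset.sum_sub_distrib]
      _ = _ := by rw [← Finset.mul_sum, ← Finset.mul_sum]
  rw [hexp]
  have hgoal_eq : m⁻¹ * ((∑ i, t i * ℓ i) - (-c - e * k) * (∑ i, t i)
      - (lam₀ + e) * (∑ i, φ (t i)))
      = m⁻¹ * (∑ i, t i * ℓ i) - (-c - e * k) * (m⁻¹ * (∑ i, t i))
        - (lam₀ + e) * (m⁻¹ * (∑ i, φ (t i))) := by ring
  rw [hgoal_eq]
  nlinarith [h4, hprod, heδ]

end auxlemmas


/-- **Strong duality for φ-divergence DRO over an empirical measure** (Shapiro 2017):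
sup_{Q : D_φ(Q,P̂ₙ) ≤ δ} E_Q[ℓ] = inf_{λ ≥ 0, μ} { E_{P̂ₙ}[λφ*((ℓ − μ)/λ)] + λδ + μ }. -/
theorem phi_divergence_dro_duality {n : ℕ} (hn : 0 < n)
    (φ : ℝ → ℝ) (hconv : ConvexOn ℝ (Set.Ici 0) φ)
    (hlsc : LowerSemicontinuousOn φ (Set.Ici 0)) (hφ1 : φ 1 = 0)
    (ℓ : Fin n → ℝ) (δ : ℝ) (hδ : 0 < δ) :
    ((sSup {r : ℝ | ∃ qv : Fin n → ℝ, (∀ i, 0 ≤ qv i) ∧ (∑ i, qv i) = 1 ∧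
        (n : ℝ)⁻¹ * ∑ i, φ ((n : ℝ) * qv i) ≤ δ ∧ r = ∑ i, qv i * ℓ i} : ℝ) : EReal)
      = ⨅ lam : {l : ℝ // 0 ≤ l}, ⨅ μ : ℝ,
          (((n : ℝ)⁻¹ : ℝ) : EReal) * (∑ i, phiPerspective φ lam.1 (ℓ i - μ))
            + ((lam.1 : ℝ) : EReal) * ((δ : ℝ) : EReal) + ((μ : ℝ) : EReal) := by
  classical
  set m : ℝ := (n : ℝ) with hm
  have hm0 : (0:ℝ) < m := by rw [hm]; exact_mod_cast hn
  have hmm : m⁻¹ * m = 1 := inv_mul_cancel₀ hm0.ne'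
  set S : Set ℝ := {r : ℝ | ∃ qv : Fin n → ℝ, (∀ i, 0 ≤ qv i) ∧ (∑ i, qv i) = 1 ∧
      m⁻¹ * ∑ i, φ (m * qv i) ≤ δ ∧ r = ∑ i, qv i * ℓ i} with hS
  set v : ℝ := sSup S with hv
  -- the uniform distribution is feasible
  have huq : (∑ _i : Fin n, m⁻¹) = 1 := by
    rw [Finset.sum_const, Finset.card_univ, Fintype.card_fin, nsmul_eq_mul]
    exact mul_inv_cancel₀ hm0.ne'
  have hφu : (∑ _i : Fin n, φ (m * m⁻¹)) = (0:ℝ) := by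
    rw [mul_inv_cancel₀ hm0.ne', hφ1]
    exact Finset.sum_const_zero
  have hr0 : (∑ i, m⁻¹ * ℓ i) ∈ S :=
    ⟨fun _ => m⁻¹, fun _ => inv_nonneg.2 hm0.le, huq,
      by rw [hφu, mul_zero]; exact hδ.le, rfl⟩
  have hSne : S.Nonempty := ⟨_, hr0⟩
  have hSbdd : BddAbove S := by
    refine ⟨∑ i, |ℓ i|, ?_⟩
    rintro r ⟨q, hq, hsum, -, rfl⟩
    refine Finset.sum_le_sum fun i _ => ?_
    have hqi1 : q i ≤ 1 := by
      rw [← hsum]; exact Finset.single_le_sum (fun j _ => hq j) (Finset.mem_univ i)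
    calc q i * ℓ i ≤ q i * |ℓ i| := mul_le_mul_of_nonneg_left (le_abs_self _) (hq i)
      _ ≤ 1 * |ℓ i| := mul_le_mul_of_nonneg_right hqi1 (abs_nonneg _)
      _ = |ℓ i| := one_mul _
  have hub : ∀ q : Fin n → ℝ, (∀ i, 0 ≤ q i) → (∑ i, q i) = 1 →
      m⁻¹ * ∑ i, φ (m * q i) ≤ δ → ∑ i, q i * ℓ i ≤ v :=
    fun q h1 h2 h3 => le_csSup hSbdd ⟨q, h1, h2, h3, rfl⟩
  -- weak duality
  have hge : ((v : ℝ) : EReal) ≤ ⨅ lam : {l : ℝ // 0 ≤ l}, ⨅ μ : ℝ,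
      ((m⁻¹ : ℝ) : EReal) * (∑ i, phiPerspective φ lam.1 (ℓ i - μ))
        + ((lam.1 : ℝ) : EReal) * ((δ : ℝ) : EReal) + ((μ : ℝ) : EReal) := by
    refine le_iInf fun lam => le_iInf fun μ => ?_
    set body : EReal := ((m⁻¹ : ℝ) : EReal) * (∑ i, phiPerspective φ lam.1 (ℓ i - μ))
        + ((lam.1 : ℝ) : EReal) * ((δ : ℝ) : EReal) + ((μ : ℝ) : EReal) with hbody
    have h1 : ∀ r ∈ S, (r : EReal) ≤ body := by
      rintro r ⟨q, hq, hsum, hdiv, rfl⟩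
      set a : Fin n → ℝ := fun i => (ℓ i - μ) * (m * q i) - lam.1 * φ (m * q i) with ha
      have hper : ∀ i, ((a i : ℝ) : EReal) ≤ phiPerspective φ lam.1 (ℓ i - μ) := fun i =>
        persp_lb φ lam.2 _ _ (mul_nonneg hm0.le (hq i))
      have hsum1 : ((∑ i, a i : ℝ) : EReal) ≤ ∑ i, phiPerspective φ lam.1 (ℓ i - μ) := by
        rw [ereal_coe_sum]; exact Finset.sum_le_sum fun i _ => hper i
      have hmul : ((m⁻¹ : ℝ) : EReal) * ((∑ i, a i : ℝ) : EReal)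
          ≤ ((m⁻¹ : ℝ) : EReal) * ∑ i, phiPerspective φ lam.1 (ℓ i - μ) :=
        mul_le_mul_of_nonneg_left hsum1 (by exact_mod_cast inv_nonneg.2 hm0.le)
      have hchain : ((m⁻¹ * (∑ i, a i) + lam.1 * δ + μ : ℝ) : EReal) ≤ body := by
        rw [hbody]
        calc ((m⁻¹ * (∑ i, a i) + lam.1 * δ + μ : ℝ) : EReal)
            = ((m⁻¹ : ℝ) : EReal) * ((∑ i, a i : ℝ) : EReal)
              + ((lam.1 : ℝ) : EReal) * ((δ : ℝ) : EReal) + ((μ : ℝ) : EReal) := by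
              rw [EReal.coe_add, EReal.coe_add, EReal.coe_mul, EReal.coe_mul]
          _ ≤ _ := add_le_add (add_le_add hmul le_rfl) le_rfl
      refine le_trans ?_ hchain
      have e1 : (∑ i, a i) = m * (∑ i, q i * ℓ i) - m * μ * (∑ i, q i)
          - lam.1 * (∑ i, φ (m * q i)) := by
        calc (∑ i, a i) = ∑ i, (m * (q i * ℓ i) - m * μ * q i - lam.1 * φ (m * q i)) :=
              Finset.sum_congr rfl fun i _ => by rw [ha]; ring
          _ = ((∑ i, m * (q i * ℓ i)) - ∑ i, m * μ * q i) - ∑ i, lam.1 * φ (m * q i) := by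
              rw [Finset.sum_sub_distrib, Finset.sum_sub_distrib]
          _ = _ := by rw [← Finset.mul_sum, ← Finset.mul_sum, ← Finset.mul_sum]
      rw [hsum, mul_one] at e1
      have hE : m⁻¹ * (∑ i, a i) = (∑ i, q i * ℓ i) - μ - lam.1 * (m⁻¹ * ∑ i, φ (m * q i)) := by
        rw [e1]
        field_simp
      have hlamdiv : lam.1 * (m⁻¹ * ∑ i, φ (m * q i)) ≤ lam.1 * δ :=
        mul_le_mul_of_nonneg_left hdiv lam.2
      have hreal : (∑ i, q i * ℓ i) ≤ m⁻¹ * (∑ i, a i) + lam.1 * δ + μ := by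
        linarith [hE, hlamdiv]
      exact_mod_cast hreal
    by_cases htop : body = ⊤
    · rw [htop]; exact le_top
    · have hbot : body ≠ ⊥ := by
        intro hb
        have h2 := h1 _ hr0
        rw [hb, le_bot_iff] at h2
        exact EReal.coe_ne_bot _ h2
      have hd : (body.toReal : EReal) = body := EReal.coe_toReal htop hbot
      have hvd : v ≤ body.toReal := by
        refine csSup_le hSne fun r hr => ?_
        have h2 := h1 r hr
        rw [← hd] at h2
        exact_mod_cast h2
      calc ((v : ℝ) : EReal) ≤ (body.toReal : EReal) := by exact_mod_cast hvd
        _ = body := hd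
  -- strong duality
  have key : ∀ ε : ℝ, 0 < ε → (⨅ lam : {l : ℝ // 0 ≤ l}, ⨅ μ : ℝ,
      ((m⁻¹ : ℝ) : EReal) * (∑ i, phiPerspective φ lam.1 (ℓ i - μ))
        + ((lam.1 : ℝ) : EReal) * ((δ : ℝ) : EReal) + ((μ : ℝ) : EReal))
      ≤ ((v + ε : ℝ) : EReal) := by
    intro ε hε
    obtain ⟨lam, hlampos, μ, hlagr⟩ := dro_lagrangian hn φ hconv hφ1 ℓ δ hδ v ε hε hub
    simp only [← hm] at hlagr
    -- the sets T i and their suprema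
    set T : Fin n → Set ℝ := fun i => (fun t => (ℓ i - μ) * t - lam * φ t) '' (Set.Ici 0) with hT
    have hTne : ∀ i, (T i).Nonempty := fun i =>
      ⟨(ℓ i - μ) * 1 - lam * φ 1, ⟨1, Set.mem_Ici.mpr zero_le_one, rfl⟩⟩
    have hTbdd : ∀ i, BddAbove (T i) := by
      intro i
      refine ⟨m * (v + ε - lam * δ - μ) - (∑ j ∈ Finset.univ.erase i, (ℓ j - μ)), ?_⟩
      rintro y ⟨t, ht, rfl⟩
      have hnn : ∀ j, 0 ≤ Function.update (fun _ => (1:ℝ)) i t j := by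
        intro j
        rcases eq_or_ne j i with h | h
        · rw [h, Function.update_self]; exact ht
        · rw [Function.update_of_ne h]; norm_num
      have h := hlagr (Function.update (fun _ => (1:ℝ)) i t) hnn
      have hsplit : (∑ j, ((Function.update (fun _ => (1:ℝ)) i t j) * (ℓ j - μ)
          - lam * φ (Function.update (fun _ => (1:ℝ)) i t j)))
          = (t * (ℓ i - μ) - lam * φ t) + ∑ j ∈ Finset.univ.erase i, (ℓ j - μ) := by
        rw [← Finset.add_sum_erase _ _ (Finset.mem_univ i)]
        congr 1
        · rw [Function.update_self]
        · refine Finset.sum_congr rfl fun j hj => ?_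
          rw [Function.update_of_ne (Finset.ne_of_mem_erase hj)]
          rw [hφ1]
          ring
      rw [hsplit] at h
      have h2 : (t * (ℓ i - μ) - lam * φ t) + ∑ j ∈ Finset.univ.erase i, (ℓ j - μ)
          ≤ m * (v + ε - lam * δ - μ) := by
        rw [← inv_mul_le_iff₀ hm0]
        linarith [h]
      show (ℓ i - μ) * t - lam * φ t
        ≤ m * (v + ε - lam * δ - μ) - ∑ j ∈ Finset.univ.erase i, (ℓ j - μ)
      nlinarith [h2]
    set σ : Fin n → ℝ := fun i => sSup (T i) with hσ
    have hσub : ∀ i, ∀ t : ℝ, 0 ≤ t → (ℓ i - μ) * t - lam * φ t ≤ σ i := fun i t ht =>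
      le_csSup (hTbdd i) ⟨t, ht, rfl⟩
    -- EReal upper bound for the dual objective
    have hper_ub : ∀ i, phiPerspective φ lam (ℓ i - μ) ≤ ((σ i : ℝ) : EReal) := fun i =>
      persp_ub φ hlampos _ _ (fun t ht => hσub i t ht)
    have hsum_ub : (∑ i, phiPerspective φ lam (ℓ i - μ)) ≤ ((∑ i, σ i : ℝ) : EReal) := by
      rw [ereal_coe_sum]; exact Finset.sum_le_sum fun i _ => hper_ub i
    -- the real bound on the sum of suprema
    have hfinal : m⁻¹ * (∑ i, σ i) + lam * δ + μ ≤ v + ε := by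
      refine le_of_forall_pos_le_add ?_
      intro η hη
      have hch : ∀ i : Fin n, ∃ t : ℝ, 0 ≤ t ∧ σ i - η < (ℓ i - μ) * t - lam * φ t := by
        intro i
        obtain ⟨y, ⟨t, ht, rfl⟩, hy⟩ :=
          exists_lt_of_lt_csSup (hTne i) (show σ i - η < σ i by linarith [hη])
        exact ⟨t, ht, hy⟩
      choose t ht hσt using hch
      have h := hlagr t ht
      have hsum2 : (∑ i, (σ i - η)) ≤ ∑ i, (t i * (ℓ i - μ) - lam * φ (t i)) :=
        Finset.sum_le_sum fun i _ => by nlinarith [hσt i]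
      have hsum3 : (∑ i, (σ i - η)) = (∑ i, σ i) - m * η := by
        rw [Finset.sum_sub_distrib, Finset.sum_const, Finset.card_univ, Fintype.card_fin,
          nsmul_eq_mul]
      have hsum4 : m⁻¹ * ((∑ i, σ i) - m * η) ≤ m⁻¹ * (∑ i, (t i * (ℓ i - μ) - lam * φ (t i))) := by
        rw [← hsum3]
        exact mul_le_mul_of_nonneg_left hsum2 (inv_nonneg.2 hm0.le)
      have hsum5 : m⁻¹ * ((∑ i, σ i) - m * η) = m⁻¹ * (∑ i, σ i) - η := by
        have : m⁻¹ * ((∑ i, σ i) - m * η) = m⁻¹ * (∑ i, σ i) - (m⁻¹ * m) * η := by ring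
        rw [this, hmm, one_mul]
      linarith [hsum4, hsum5, h]
    -- assemble
    have hdual_ub : ((m⁻¹ : ℝ) : EReal) * (∑ i, phiPerspective φ lam (ℓ i - μ))
        + ((lam : ℝ) : EReal) * ((δ : ℝ) : EReal) + ((μ : ℝ) : EReal)
        ≤ ((v + ε : ℝ) : EReal) := by
      calc ((m⁻¹ : ℝ) : EReal) * (∑ i, phiPerspective φ lam (ℓ i - μ))
          + ((lam : ℝ) : EReal) * ((δ : ℝ) : EReal) + ((μ : ℝ) : EReal)
          ≤ ((m⁻¹ : ℝ) : EReal) * ((∑ i, σ i : ℝ) : EReal)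
            + ((lam : ℝ) : EReal) * ((δ : ℝ) : EReal) + ((μ : ℝ) : EReal) :=
            add_le_add (add_le_add (mul_le_mul_of_nonneg_left hsum_ub
              (by exact_mod_cast inv_nonneg.2 hm0.le)) le_rfl) le_rfl
        _ = ((m⁻¹ * (∑ i, σ i) + lam * δ + μ : ℝ) : EReal) := by
            rw [← EReal.coe_mul, ← EReal.coe_mul, ← EReal.coe_add, ← EReal.coe_add]
        _ ≤ ((v + ε : ℝ) : EReal) := by exact_mod_cast hfinal
    calc (⨅ lam : {l : ℝ // 0 ≤ l}, ⨅ μ : ℝ,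
        ((m⁻¹ : ℝ) : EReal) * (∑ i, phiPerspective φ lam.1 (ℓ i - μ))
          + ((lam.1 : ℝ) : EReal) * ((δ : ℝ) : EReal) + ((μ : ℝ) : EReal))
        ≤ ⨅ μ' : ℝ, ((m⁻¹ : ℝ) : EReal) * (∑ i, phiPerspective φ lam (ℓ i - μ'))
          + ((lam : ℝ) : EReal) * ((δ : ℝ) : EReal) + ((μ' : ℝ) : EReal) :=
          iInf_le _ (⟨lam, hlampos.le⟩ : {l : ℝ // 0 ≤ l})
      _ ≤ ((m⁻¹ : ℝ) : EReal) * (∑ i, phiPerspective φ lam (ℓ i - μ))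
          + ((lam : ℝ) : EReal) * ((δ : ℝ) : EReal) + ((μ : ℝ) : EReal) := iInf_le _ μ
      _ ≤ ((v + ε : ℝ) : EReal) := hdual_ub
  have hle : (⨅ lam : {l : ℝ // 0 ≤ l}, ⨅ μ : ℝ,
      ((m⁻¹ : ℝ) : EReal) * (∑ i, phiPerspective φ lam.1 (ℓ i - μ))
        + ((lam.1 : ℝ) : EReal) * ((δ : ℝ) : EReal) + ((μ : ℝ) : EReal))
      ≤ ((v : ℝ) : EReal) := by
    set I : EReal := ⨅ lam : {l : ℝ // 0 ≤ l}, ⨅ μ : ℝ,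
      ((m⁻¹ : ℝ) : EReal) * (∑ i, phiPerspective φ lam.1 (ℓ i - μ))
        + ((lam.1 : ℝ) : EReal) * ((δ : ℝ) : EReal) + ((μ : ℝ) : EReal) with hI
    by_contra hcon
    push_neg at hcon
    have hne_top : I ≠ ⊤ := by
      intro h
      have h2 := key 1 one_pos
      rw [h] at h2
      exact EReal.coe_ne_top _ (top_le_iff.mp h2)
    have hne_bot : I ≠ ⊥ := (lt_of_le_of_lt bot_le hcon).ne'
    have hd : (I.toReal : EReal) = I := EReal.coe_toReal hne_top hne_bot
    have hvd : v < I.toReal := by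
      have := hcon
      rw [← hd] at this
      exact_mod_cast this
    have h3 := key ((I.toReal - v) / 2) (by linarith)
    rw [← hd] at h3
    have h4 : I.toReal ≤ v + (I.toReal - v) / 2 := by exact_mod_cast h3
    linarith
  exact le_antisymm hge hle
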